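/- Let q > 1 and a be positive integers, and let s be an integer with 2^s > a·q. Set b = ⌈2^s / q⌉. Then ⌊a/q⌋ = (a·b) >> s, i.e., ⌊a/q⌋ = ⌊a·b / 2^s⌋. -/
import Mathlib


/-- Barrett division: `⌊a/q⌋ = ⌈a·b / 2^s⌉` where `b = ⌈2^s/q⌉` and `2^s > a·q`. -/
theorem barrett_division (q a : ℤ) (hq : 1 < q) (ha : 0 < a) (s : ℕ)
    (hs : a * q < 2 ^ s) :
    a / q = a * ⌈(2 ^ s : ℚ) / q⌉ / 2 ^ s := by
  set b : ℤ := ⌈(2 ^ s : ℚ) / q⌉ with hb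
  have hq0 : (0:ℚ) < (q:ℚ) := by exact_mod_cast (by linarith : (0:ℤ) < q)
  have hb1 : (2:ℤ) ^ s ≤ q * b := by
    have h := Int.le_ceil ((2 ^ s : ℚ) / q)
    rw [div_le_iff₀ hq0] at h
    have : ((2:ℚ) ^ s) ≤ (q:ℚ) * (b:ℚ) := by linarith [h]
    exact_mod_cast this
  have hb2 : q * b < 2 ^ s + q := by
    have h := Int.ceil_lt_add_one ((2 ^ s : ℚ) / q)
    have : (q:ℚ) * (b:ℚ) < 2 ^ s + q := by
      rw [hb] at *
      calc (q:ℚ) * (⌈(2 ^ s : ℚ) / q⌉ : ℚ) < q * ((2 ^ s : ℚ) / q + 1) := by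
            exact (mul_lt_mul_iff_right₀ hq0).mpr h
        _ = 2 ^ s + q := by field_simp
    exact_mod_cast this
  set m := a / q with hm
  set t := a % q with ht
  have hdec : a = q * m + t := (Int.mul_ediv_add_emod a q).symm
  have ht0 : 0 ≤ t := Int.emod_nonneg a (by linarith)
  have htq : t < q := Int.emod_lt_of_pos a (by linarith)
  have hm0 : 0 ≤ m := Int.ediv_nonneg ha.le (by linarith)
  have hs0 : (0:ℤ) < 2 ^ s := by positivity
  have hb0 : 0 ≤ b := by nlinarith
  have hlow : m * 2 ^ s ≤ a * b := by nlinarith [mul_le_mul_of_nonneg_left hb1 hm0]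
  have hhigh : a * b < (m + 1) * 2 ^ s := by
    have key : a * b * q < (m + 1) * 2 ^ s * q := by nlinarith [mul_le_mul_of_nonneg_left hb2.le ha.le]
    exact lt_of_mul_lt_mul_right key (by linarith)
  have h1 : m ≤ a * b / 2 ^ s := (Int.le_ediv_iff_mul_le hs0).mpr hlow
  have h2 : a * b / 2 ^ s < m + 1 := (Int.ediv_lt_iff_lt_mul hs0).mpr hhigh
  omega
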